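/- Let δ > 0 and let Δ be a real number with 0 < |Δ| < δ. If V is a real random variable uniformly distributed on [−δ, δ], then ℙ( |V| + |Δ − V| < δ and V·Δ ≥ 0 ) = (δ + |Δ|)/(4δ). -/

import Mathlib

open MeasureTheory

/-- The uniform probability measure on the interval `[a, b]`. -/
noncomputable def uniformIcc (a b : ℝ) : Measure ℝ :=
  (ENNReal.ofReal (b - a))⁻¹ • volume.restrict (Set.Icc a b)

lemma calc_aux (δ c : ℝ) (hδ : 0 < δ) (hc : 0 ≤ c) :
    (ENNReal.ofReal (δ - -δ))⁻¹ * ENNReal.ofReal (c / 2) =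
      ENNReal.ofReal (c / (4 * δ)) := by
  have h2δ : (0:ℝ) < δ - -δ := by linarith
  rw [← ENNReal.ofReal_inv_of_pos h2δ, ← ENNReal.ofReal_mul (by positivity)]
  congr 1
  rw [show δ - -δ = 2 * δ by ring]
  field_simp
  ring

/-- For `0 < |Δ| < δ` and `V` uniform on `[-δ, δ]`,
`ℙ(|V| + |Δ - V| < δ and V·Δ ≥ 0) = (δ + |Δ|)/(4δ)`. -/
theorem stmt10 {Ω : Type*} [MeasurableSpace Ω] (P : Measure Ω) [IsProbabilityMeasure P]
    (δ Δ : ℝ) (hδ : 0 < δ) (hΔ0 : 0 < |Δ|) (hΔ : |Δ| < δ)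
    (V : Ω → ℝ) (hVmeas : Measurable V)
    (hVunif : Measure.map V P = uniformIcc (-δ) δ) :
    P {ω | |V ω| + |Δ - V ω| < δ ∧ 0 ≤ V ω * Δ} =
      ENNReal.ofReal ((δ + |Δ|) / (4 * δ)) := by
  have hS : MeasurableSet {v : ℝ | |v| + |Δ - v| < δ ∧ 0 ≤ v * Δ} := by
    apply MeasurableSet.inter
    · exact measurableSet_lt (measurable_id.abs.add
        ((measurable_const.sub measurable_id).abs)) measurable_const
    · exact measurableSet_le measurable_const (measurable_id.mul_const Δ)
  have hmap : P {ω | |V ω| + |Δ - V ω| < δ ∧ 0 ≤ V ω * Δ} =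
      (Measure.map V P) {v : ℝ | |v| + |Δ - v| < δ ∧ 0 ≤ v * Δ} := by
    rw [Measure.map_apply hVmeas hS]; rfl
  rw [hmap, hVunif]
  unfold uniformIcc
  rw [Measure.smul_apply, Measure.restrict_apply hS, smul_eq_mul]
  have hΔne : Δ ≠ 0 := abs_pos.mp hΔ0
  rcases hΔne.lt_or_gt with hpos | hpos
  · -- Δ < 0
    have habs : |Δ| = -Δ := abs_of_neg hpos
    have hset : {v : ℝ | |v| + |Δ - v| < δ ∧ 0 ≤ v * Δ} ∩ Set.Icc (-δ) δ =
        Set.Ioc ((Δ - δ) / 2) 0 := by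
      ext v
      simp only [Set.mem_inter_iff, Set.mem_setOf_eq, Set.mem_Icc, Set.mem_Ioc]
      constructor
      · rintro ⟨⟨h1, h2⟩, h3, h4⟩
        have hv : v ≤ 0 := by nlinarith
        rcases abs_cases (Δ - v) with ⟨ha, _⟩ | ⟨ha, _⟩ <;>
          rcases abs_cases v with ⟨hb, _⟩ | ⟨hb, _⟩ <;>
          constructor <;> linarith
      · rintro ⟨h1, h2⟩
        have h3 : |v| = -v := abs_of_nonpos h2
        have h4 : |Δ - v| = -(Δ - v) ∨ |Δ - v| = Δ - v := by
          rcases abs_cases (Δ - v) with ⟨h, _⟩ | ⟨h, _⟩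
          · right; exact h
          · left; exact h
        have hΔ' : -Δ < δ := by rw [← habs]; exact hΔ
        refine ⟨⟨?_, ?_⟩, ?_, ?_⟩
        · rcases h4 with h | h <;> rw [h3, h] <;> linarith
        · nlinarith
        · linarith
        · linarith
    rw [hset, Real.volume_Ioc]
    have : (0 : ℝ) - (Δ - δ) / 2 = (δ + |Δ|) / 2 := by rw [habs]; ring
    rw [this, calc_aux δ (δ + |Δ|) hδ (by positivity)]
  · -- Δ > 0
    have habs : |Δ| = Δ := abs_of_pos hpos
    have hset : {v : ℝ | |v| + |Δ - v| < δ ∧ 0 ≤ v * Δ} ∩ Set.Icc (-δ) δ =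
        Set.Ico 0 ((δ + Δ) / 2) := by
      ext v
      simp only [Set.mem_inter_iff, Set.mem_setOf_eq, Set.mem_Icc, Set.mem_Ico]
      constructor
      · rintro ⟨⟨h1, h2⟩, h3, h4⟩
        have hv : 0 ≤ v := by nlinarith
        rcases abs_cases (Δ - v) with ⟨ha, _⟩ | ⟨ha, _⟩ <;>
          rcases abs_cases v with ⟨hb, _⟩ | ⟨hb, _⟩ <;>
          constructor <;> linarith
      · rintro ⟨h1, h2⟩
        have h3 : |v| = v := abs_of_nonneg h1
        refine ⟨⟨?_, ?_⟩, ?_, ?_⟩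
        · rcases abs_cases (Δ - v) with ⟨h, _⟩ | ⟨h, _⟩ <;> rw [h3, h] <;>
            linarith [show Δ < δ by rw [← habs]; exact hΔ]
        · nlinarith
        · linarith
        · linarith
    rw [hset, Real.volume_Ico]
    have : (δ + Δ) / 2 - 0 = (δ + |Δ|) / 2 := by rw [habs]; ring
    rw [this, calc_aux δ (δ + |Δ|) hδ (by positivity)]
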